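/- arXiv:math/0610245 — 3 statements merged into one kernel-verified Lean document; each statement's English description precedes it below -/
import Mathlib

section
/- For every integer k ≥ 1 there exists a constant C > 0 (independent of m) such that for every integer m ≥ 1 and all indices i₁, …, i_k ∈ {1, …, m}, one has |E[ ĝ_{i₁ i₂} · ĝ_{i₂ i₃} ⋯ ĝ_{i_{k−1} i_k} · ĝ_{i_k i₁} ]| ≤ C·e^{−m^{m−1/2}}, where ĝ_{ij} := 1_{{Σ_{1≤p,q≤m} |g_{pq}|² > m^{2m}}} · g_{ij}. -/
open MeasureTheory

/-- The standard complex Gaussian probability measure on `ℂ`, with density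
`z ↦ (1/π) · exp (-|z|²)` with respect to Lebesgue measure on `ℂ ≅ ℝ²`. -/
noncomputable def stdComplexGaussian : Measure ℂ :=
  volume.withDensity fun z => ENNReal.ofReal (Real.exp (-(‖z‖) ^ 2) / Real.pi)

/-- The joint law of the i.i.d. family `(g_{ij})_{1 ≤ i,j ≤ m}` of standard complex
Gaussian variables, realized as the coordinate functions on `(ℂ^{m×m}, γ^{⊗m²})`. -/
noncomputable def gaussianFamily (m : ℕ) : Measure (Fin m × Fin m → ℂ) :=
  Measure.pi fun _ => stdComplexGaussian

/-- `ĝ_{ij} = 1_{Σ_{p,q} |g_{pq}|² > m^{2m}} · g_{ij}` : the Gaussian entries restricted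
to the truncation event. -/
noncomputable def ghat (m : ℕ) (g : Fin m × Fin m → ℂ) (i j : Fin m) : ℂ :=
  if (m : ℝ) ^ (2 * m) < ∑ p : Fin m × Fin m, (‖g p‖) ^ 2 then g (i, j) else 0

open Real

lemma integrable_cgauss {b : ℝ} (hb : 0 < b) :
    Integrable (fun z : ℂ => Real.exp (-(b * ‖z‖ ^ 2))) := by
  rw [← MeasurePreserving.integrable_comp_emb
    (Complex.volume_preserving_equiv_real_prod.symm Complex.measurableEquivRealProd)
    (MeasurableEquiv.measurableEmbedding _)]
  have : ((fun z : ℂ => Real.exp (-(b * ‖z‖ ^ 2))) ∘ Complex.measurableEquivRealProd.symm)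
      = fun p : ℝ × ℝ => Real.exp (-(b * p.1 ^ 2)) * Real.exp (-(b * p.2 ^ 2)) := by
    funext p
    simp only [Function.comp_apply, Complex.measurableEquivRealProd_symm_apply, ← Real.exp_add]
    congr 1
    rw [Complex.sq_norm, Complex.normSq_mk]
    ring
  rw [this, Measure.volume_eq_prod]
  exact Integrable.mul_prod (by simpa using integrable_exp_neg_mul_sq hb)
    (by simpa using integrable_exp_neg_mul_sq hb)

lemma integral_cgauss {b : ℝ} (hb : 0 < b) :
    ∫ z : ℂ, Real.exp (-(b * ‖z‖ ^ 2)) = π / b := by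
  have h := Complex.integral_exp_neg_mul_rpow (p := 2) one_le_two hb
  simp only [Real.rpow_two] at h
  simp only [neg_mul] at h
  rw [h]
  rw [show (-2 : ℝ)/2 = -1 by norm_num, Real.rpow_neg_one,
    show (2:ℝ)/2 + 1 = 2 by norm_num, Real.Gamma_two]
  field_simp

lemma meas_rho : Measurable fun z : ℂ => Real.exp (-(‖z‖) ^ 2) / Real.pi :=
  ((Real.continuous_exp.comp ((continuous_pow 2).comp continuous_norm).neg).div_const
    Real.pi).measurable

lemma rho_nonneg (z : ℂ) : 0 ≤ Real.exp (-(‖z‖) ^ 2) / Real.pi :=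
  div_nonneg (Real.exp_nonneg _) Real.pi_pos.le

instance : IsProbabilityMeasure stdComplexGaussian := by
  constructor
  rw [stdComplexGaussian, withDensity_apply _ MeasurableSet.univ, Measure.restrict_univ,
    ← ofReal_integral_eq_lintegral_ofReal ?hi (Filter.Eventually.of_forall rho_nonneg)]
  · rw [integral_div, show (fun z : ℂ => Real.exp (-(‖z‖) ^ 2))
        = fun z : ℂ => Real.exp (-(1 * ‖z‖ ^ 2)) by simp,
      integral_cgauss one_pos]
    simp [div_self Real.pi_pos.ne']
  case hi =>
    apply Integrable.div_const
    have := integrable_cgauss one_pos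
    simpa using this

lemma key_fun_eq : (fun z : ℂ => Real.exp (‖z‖ ^ 2 / 4) *
      (Real.exp (-(‖z‖) ^ 2) / Real.pi))
    = fun z : ℂ => Real.exp (-(3/4 * ‖z‖ ^ 2)) / Real.pi := by
  funext z
  rw [mul_div_assoc', ← Real.exp_add]
  congr 1
  ring

lemma integrable_phi :
    Integrable (fun z : ℂ => Real.exp (‖z‖ ^ 2 / 4)) stdComplexGaussian := by
  rw [stdComplexGaussian, integrable_withDensity_iff (meas_rho.ennreal_ofReal)
    (Filter.Eventually.of_forall fun z => ENNReal.ofReal_lt_top)]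
  have : (fun z : ℂ => Real.exp (‖z‖ ^ 2 / 4) *
      (ENNReal.ofReal (Real.exp (-(‖z‖) ^ 2) / Real.pi)).toReal)
      = fun z : ℂ => Real.exp (-(3/4 * ‖z‖ ^ 2)) / Real.pi := by
    rw [← key_fun_eq]
    funext z
    rw [ENNReal.toReal_ofReal (rho_nonneg z)]
  rw [this]
  exact (integrable_cgauss (by norm_num)).div_const _

lemma integral_phi :
    ∫ z : ℂ, Real.exp (‖z‖ ^ 2 / 4) ∂stdComplexGaussian = 4/3 := by
  have hrepr : stdComplexGaussian = volume.withDensity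
      (fun z : ℂ => ((Real.exp (-(‖z‖) ^ 2) / Real.pi).toNNReal : ENNReal)) := rfl
  rw [hrepr, integral_withDensity_eq_integral_smul
    (meas_rho.real_toNNReal) (fun z : ℂ => Real.exp (‖z‖ ^ 2 / 4))]
  have : (fun z : ℂ => (Real.exp (-(‖z‖) ^ 2) / Real.pi).toNNReal •
      Real.exp (‖z‖ ^ 2 / 4))
      = fun z : ℂ => Real.exp (-(3/4 * ‖z‖ ^ 2)) / Real.pi := by
    rw [← key_fun_eq]
    funext z
    rw [NNReal.smul_def, Real.coe_toNNReal _ (rho_nonneg z), smul_eq_mul, mul_comm]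
  rw [this, integral_div, integral_cgauss (by norm_num)]
  rw [div_div_eq_mul_div]
  rw [div_eq_iff Real.pi_pos.ne']
  ring

lemma le_sqrt_inv_mul_exp {ε : ℝ} (hε : 0 < ε) {t : ℝ} (ht : 0 ≤ t) :
    t ≤ Real.sqrt ε⁻¹ * Real.exp (ε * t ^ 2) := by
  have hs : 0 < Real.sqrt ε := Real.sqrt_pos.mpr hε
  rw [Real.sqrt_inv, le_inv_mul_iff₀ hs]
  have h1 : ε * t ^ 2 ≤ Real.exp (ε * t ^ 2) := by
    linarith [Real.add_one_le_exp (ε * t ^ 2)]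
  have h2 : Real.sqrt ε ^ 2 = ε := Real.sq_sqrt hε.le
  rcases le_or_gt (Real.sqrt ε * t) 1 with h | h
  · have : 1 ≤ Real.exp (ε * t ^ 2) := Real.one_le_exp (by positivity)
    linarith
  · nlinarith [h, h1, h2]

/-- For each `k ≥ 1` there is a constant `C > 0`, independent of `m`, such that for
every `m ≥ 1` and all indices `i₁, …, i_k ∈ {1, …, m}` one has
`|E[ĝ_{i₁ i₂} ĝ_{i₂ i₃} ⋯ ĝ_{i_k i₁}]| ≤ C · e^{-m^{m - 1/2}}`. -/
theorem cyclic_truncated_moment_bound (k : ℕ) (hk : 1 ≤ k) :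
    ∃ C : ℝ, 0 < C ∧ ∀ m : ℕ, 1 ≤ m → ∀ i : Fin k → Fin m,
      ‖(∫ g : Fin m × Fin m → ℂ,
            (∏ j : Fin k, ghat m g (i j) (i (finRotate k j))) ∂gaussianFamily m)‖
        ≤ C * Real.exp (-(m : ℝ) ^ ((m : ℝ) - 1 / 2)) := by
  set c : ℝ := Real.sqrt (4 * ((k : ℝ) + 1)) with hc_def
  have hc : 0 < c := Real.sqrt_pos.mpr (by positivity)
  refine ⟨c ^ k * Real.exp (16 * ((k : ℝ) + 1)), by positivity, ?_⟩
  intro m hm i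
  set ε : ℝ := (4 * ((k : ℝ) + 1))⁻¹ with hε_def
  have hεpos : 0 < ε := by positivity
  have hM : (1 : ℝ) ≤ (m : ℝ) := by exact_mod_cast hm
  -- pointwise bound
  have hpt : ∀ g : Fin m × Fin m → ℂ,
      ‖∏ j : Fin k, ghat m g (i j) (i (finRotate k j))‖
        ≤ (c ^ k * Real.exp (-(ε * (m : ℝ) ^ (2 * m)))) *
            ∏ p : Fin m × Fin m, Real.exp (‖g p‖ ^ 2 / 4) := by
    intro g
    have hRHSfac : (0:ℝ) ≤ ∏ p : Fin m × Fin m, Real.exp (‖g p‖ ^ 2 / 4) :=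
      Finset.prod_nonneg fun p _ => (Real.exp_nonneg _)
    simp only [ghat]
    by_cases hS : (m : ℝ) ^ (2 * m) < ∑ p : Fin m × Fin m, (‖g p‖) ^ 2
    · simp only [hS, if_true]
      set S : ℝ := ∑ p : Fin m × Fin m, (‖g p‖) ^ 2 with hS_def
      have hfac : ∀ j : Fin k,
          ‖g (i j, i (finRotate k j))‖ ≤ c * Real.exp (ε * S) := by
        intro j
        have e1 := le_sqrt_inv_mul_exp hεpos
          (norm_nonneg (g (i j, i (finRotate k j))))
        have e2 : Real.sqrt ε⁻¹ = c := by rw [hε_def, inv_inv]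
        rw [e2] at e1
        refine e1.trans (mul_le_mul_of_nonneg_left ?_ hc.le)
        refine Real.exp_le_exp.mpr (mul_le_mul_of_nonneg_left ?_ hεpos.le)
        exact Finset.single_le_sum (f := fun p : Fin m × Fin m => (‖g p‖) ^ 2)
          (fun p _ => sq_nonneg _) (Finset.mem_univ _)
      calc ‖∏ j : Fin k, g (i j, i (finRotate k j))‖
          = ∏ j : Fin k, ‖g (i j, i (finRotate k j))‖ := by
            exact norm_prod _ _
        _ ≤ ∏ _j : Fin k, (c * Real.exp (ε * S)) := by
            refine Finset.prod_le_prod (fun j _ => norm_nonneg _) fun j _ => hfac j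
        _ = c ^ k * Real.exp ((k : ℝ) * (ε * S)) := by
            rw [Finset.prod_const, Finset.card_univ, Fintype.card_fin, mul_pow,
              ← Real.exp_nat_mul]
        _ ≤ c ^ k * (Real.exp (-(ε * (m : ℝ) ^ (2 * m))) * Real.exp (S / 4)) := by
            refine mul_le_mul_of_nonneg_left ?_ (pow_nonneg hc.le k)
            rw [← Real.exp_add]
            refine Real.exp_le_exp.mpr ?_
            have h1 : ε * ((m : ℝ) ^ (2 * m)) ≤ ε * S :=
              mul_le_mul_of_nonneg_left hS.le hεpos.le
            have h2 : S / 4 = ε * ((k : ℝ) + 1) * S := by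
              rw [hε_def]; field_simp
            have h3 : ε * ((k : ℝ) + 1) * S = (k : ℝ) * (ε * S) + ε * S := by ring
            linarith
        _ = (c ^ k * Real.exp (-(ε * (m : ℝ) ^ (2 * m)))) *
              ∏ p : Fin m × Fin m, Real.exp (‖g p‖ ^ 2 / 4) := by
            rw [← Real.exp_sum, mul_assoc]
            congr 2
            rw [hS_def, Finset.sum_div]
    · simp only [hS, if_false]
      rw [Finset.prod_const, Finset.card_univ, Fintype.card_fin,
        zero_pow (by omega : k ≠ 0), norm_zero]
      positivity
  -- integral machinery via a local `MeasureSpace` instance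
  letI : MeasureSpace ℂ := ⟨stdComplexGaussian⟩
  haveI hSF : SigmaFinite (volume : Measure ℂ) :=
    (by infer_instance : SigmaFinite stdComplexGaussian)
  have hμ : gaussianFamily m = (volume : Measure (Fin m × Fin m → ℂ)) := rfl
  have hvol : (volume : Measure ℂ) = stdComplexGaussian := rfl
  have hint : Integrable
      (fun g : Fin m × Fin m → ℂ => ∏ p : Fin m × Fin m, Real.exp (‖g p‖ ^ 2 / 4))
      (gaussianFamily m) := by
    rw [hμ]
    exact Integrable.fintype_prod (f := fun _ : Fin m × Fin m =>
      fun z : ℂ => Real.exp (‖z‖ ^ 2 / 4)) fun _ => (hvol ▸ integrable_phi)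
  have hval : ∫ g : Fin m × Fin m → ℂ,
      (∏ p : Fin m × Fin m, Real.exp (‖g p‖ ^ 2 / 4)) ∂gaussianFamily m
      = (4 / 3 : ℝ) ^ (m * m) := by
    rw [hμ]
    rw [show (∫ g : Fin m × Fin m → ℂ,
        (∏ p : Fin m × Fin m, Real.exp (‖g p‖ ^ 2 / 4)) ∂volume)
      = (∫ z : ℂ, Real.exp (‖z‖ ^ 2 / 4) ∂volume) ^ (Fintype.card (Fin m × Fin m))
      from integral_fintype_prod_eq_pow (ι := Fin m × Fin m) (fun z : ℂ => Real.exp (‖z‖ ^ 2 / 4))]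
    rw [hvol, integral_phi]
    simp
  -- put the pieces together
  have hbound : ‖∫ g : Fin m × Fin m → ℂ,
        (∏ j : Fin k, ghat m g (i j) (i (finRotate k j))) ∂gaussianFamily m‖
      ≤ (c ^ k * Real.exp (-(ε * (m : ℝ) ^ (2 * m)))) * (4 / 3 : ℝ) ^ (m * m) := by
    refine (norm_integral_le_integral_norm _).trans ?_
    have step : ∫ g : Fin m × Fin m → ℂ,
        ‖∏ j : Fin k, ghat m g (i j) (i (finRotate k j))‖ ∂gaussianFamily m
        ≤ ∫ g : Fin m × Fin m → ℂ,
          ((c ^ k * Real.exp (-(ε * (m : ℝ) ^ (2 * m)))) *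
            ∏ p : Fin m × Fin m, Real.exp (‖g p‖ ^ 2 / 4)) ∂gaussianFamily m := by
      refine integral_mono_of_nonneg (Filter.Eventually.of_forall fun g => norm_nonneg _)
        (hint.const_mul _) (Filter.Eventually.of_forall fun g => ?_)
      exact hpt g
    refine step.trans ?_
    rw [integral_const_mul, hval]
  refine hbound.trans ?_
  -- final arithmetic comparison
  rw [mul_assoc, mul_assoc]
  refine mul_le_mul_of_nonneg_left ?_ (pow_nonneg hc.le k)
  have h43 : ((4 : ℝ) / 3) ^ (m * m) ≤ Real.exp ((m : ℝ) * m) := by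
    calc ((4 : ℝ) / 3) ^ (m * m) ≤ (Real.exp 1) ^ (m * m) := by
          refine pow_le_pow_left₀ (by norm_num) ?_ _
          linarith [Real.add_one_le_exp (1 : ℝ)]
      _ = Real.exp ((m : ℝ) * m) := by
          rw [← Real.exp_nat_mul, mul_one, Nat.cast_mul]
  have hR : (m : ℝ) ^ ((m : ℝ) - 1 / 2) ≤ (m : ℝ) ^ m := by
    calc (m : ℝ) ^ ((m : ℝ) - 1 / 2) ≤ (m : ℝ) ^ (m : ℝ) :=
          Real.rpow_le_rpow_of_exponent_le hM (by linarith)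
      _ = (m : ℝ) ^ m := Real.rpow_natCast _ _
  have key : (m : ℝ) * m + (m : ℝ) ^ ((m : ℝ) - 1 / 2)
      ≤ ε * (m : ℝ) ^ (2 * m) + 16 * ((k : ℝ) + 1) := by
    have hk1 : (1 : ℝ) ≤ (k : ℝ) + 1 := by linarith [Nat.cast_nonneg (α := ℝ) k]
    have h2m : (m : ℝ) ^ (2 * m) = (m : ℝ) ^ m * (m : ℝ) ^ m := by
      rw [two_mul, pow_add]
    have hεval : ε * (8 * ((k : ℝ) + 1)) = 2 := by
      rw [hε_def]; field_simp; ring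
    rcases eq_or_lt_of_le hm with hm1 | hm2
    · have : m = 1 := hm1.symm
      subst this
      simp only [Nat.cast_one, one_mul, mul_one] at *
      have : ((1 : ℝ)) ^ ((1 : ℝ) - 1 / 2) = 1 := Real.one_rpow _
      rw [this]
      have : (1 : ℝ) ^ (2 * 1) = 1 := one_pow _
      rw [this]
      nlinarith [hεpos.le]
    · have hm2' : 2 ≤ m := hm2
      have hsq : (m : ℝ) * m ≤ (m : ℝ) ^ m := by
        calc (m : ℝ) * m = (m : ℝ) ^ 2 := (sq (m:ℝ)).symm
          _ ≤ (m : ℝ) ^ m := pow_le_pow_right₀ hM hm2'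
      set P : ℝ := (m : ℝ) ^ m with hP_def
      have hP1 : (1 : ℝ) ≤ P := one_le_pow₀ hM
      rcases le_or_gt (8 * ((k : ℝ) + 1)) P with hbig | hsmall
      · have e1 : ε * (8 * ((k : ℝ) + 1) * P) ≤ ε * (P * P) := by
          refine mul_le_mul_of_nonneg_left ?_ hεpos.le
          exact mul_le_mul_of_nonneg_right hbig (by linarith)
        have e2 : ε * (8 * ((k : ℝ) + 1) * P) = 2 * P := by
          rw [← mul_assoc, hεval]
        rw [h2m]
        nlinarith [hR, hsq]
      · rw [h2m]
        have : ε * (P * P) ≥ 0 := by positivity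
        nlinarith [hR, hsq]
  calc Real.exp (-(ε * (m : ℝ) ^ (2 * m))) * ((4 : ℝ) / 3) ^ (m * m)
      ≤ Real.exp (-(ε * (m : ℝ) ^ (2 * m))) * Real.exp ((m : ℝ) * m) :=
        mul_le_mul_of_nonneg_left h43 (Real.exp_nonneg _)
    _ = Real.exp ((m : ℝ) * m - ε * (m : ℝ) ^ (2 * m)) := by
        rw [← Real.exp_add]; ring_nf
    _ ≤ Real.exp (16 * ((k : ℝ) + 1) - (m : ℝ) ^ ((m : ℝ) - 1 / 2)) :=
        Real.exp_le_exp.mpr (by linarith)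
    _ = Real.exp (16 * ((k : ℝ) + 1)) * Real.exp (-(m : ℝ) ^ ((m : ℝ) - 1 / 2)) := by
        rw [← Real.exp_add]; ring_nf
end

section
/- For every integer k ≥ 1 there exists a constant C > 0 such that for every integer m ≥ 1, |τ'_m((Ĝ^m)^k)| ≤ C·m^{k/2−1}·e^{−m^{m−1/2}}; in particular, for each fixed k, τ'_m((Ĝ^m)^k) → 0 as m → ∞. -/
open MeasureTheory

/-- `Ĝ^m = G^m − G̃^m = 1_{Σ_{i,j}|g_{ij}|² > m^{2m}} · (g_{ij}/√m)_{i,j}` : the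
truncated-away part of the standard Gaussian random matrix. -/
noncomputable def Ghat (m : ℕ) (g : Fin m × Fin m → ℂ) : Matrix (Fin m) (Fin m) ℂ :=
  Matrix.of fun i j =>
    if (m : ℝ) ^ (2 * m) < ∑ p : Fin m × Fin m, (‖g p‖) ^ 2 then
      g (i, j) / (Real.sqrt m : ℂ) else 0

/-- `τ'_m(X) = E[(1/m)·tr X]` : the normalized expected trace of a random matrix `X`. -/
noncomputable def tauHat (m k : ℕ) : ℂ :=
  ∫ g : Fin m × Fin m → ℂ, ((m : ℂ)⁻¹ * Matrix.trace ((Ghat m g) ^ k)) ∂gaussianFamily m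

/- ### Auxiliary lemmas -/

open Real

lemma gauss_int' {b : ℝ} (hb : 0 < b) : ∫ z : ℂ, Real.exp (-b * ‖z‖^2) = π / b := by
  rw [GaussianFourier.integral_rexp_neg_mul_sq_norm hb, Complex.finrank_real_complex]
  norm_num

lemma gauss_integrable' {b : ℝ} (hb : 0 < b) :
    Integrable (fun z : ℂ => Real.exp (-b * ‖z‖^2)) := by
  have h := (GaussianFourier.integrable_cexp_neg_mul_sq_norm_add (V := ℂ)
    (b := (b:ℂ)) (by simpa using hb) 0 0).norm
  refine h.congr (Filter.Eventually.of_forall fun z => ?_)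
  simp [Complex.norm_exp, ← Complex.ofReal_pow]

lemma density_meas' : Measurable fun z : ℂ =>
    (Real.exp (-(‖z‖) ^ 2) / Real.pi).toNNReal :=
  (continuous_real_toNNReal.comp
    ((Real.continuous_exp.comp ((continuous_norm.pow 2).neg)).div_const _)).measurable

lemma std_eq' : stdComplexGaussian
    = volume.withDensity
        fun z => ((Real.exp (-(‖z‖) ^ 2) / Real.pi).toNNReal : ENNReal) := rfl

lemma integral_std' (f : ℂ → ℝ) :
    ∫ z, f z ∂stdComplexGaussian
      = ∫ z : ℂ, (Real.exp (-(‖z‖) ^ 2) / Real.pi) * f z := by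
  rw [std_eq', integral_withDensity_eq_integral_smul density_meas']
  congr 1
  ext z
  rw [NNReal.smul_def, Real.coe_toNNReal _ (by positivity)]
  simp

lemma integrable_std' (f : ℂ → ℝ)
    (h : Integrable (fun z : ℂ => (Real.exp (-(‖z‖) ^ 2) / Real.pi) * f z)) :
    Integrable f stdComplexGaussian := by
  rw [std_eq', integrable_withDensity_iff_integrable_smul density_meas']
  refine h.congr (Filter.Eventually.of_forall fun z => ?_)
  simp only [NNReal.smul_def,
    Real.coe_toNNReal (Real.exp (-(‖z‖) ^ 2) / Real.pi) (by positivity), smul_eq_mul]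

instance inst_s3 : IsProbabilityMeasure stdComplexGaussian := by
  constructor
  rw [stdComplexGaussian, withDensity_apply _ MeasurableSet.univ, setLIntegral_univ]
  rw [← ofReal_integral_eq_lintegral_ofReal]
  · rw [show (fun z : ℂ => Real.exp (-(‖z‖)^2) / Real.pi)
        = fun z : ℂ => Real.exp (-1 * ‖z‖^2) / Real.pi by
      funext z; ring_nf]
    rw [integral_div, gauss_int' one_pos]
    simp [Real.pi_ne_zero]
  · refine ((gauss_integrable' one_pos).div_const π).congr
      (Filter.Eventually.of_forall fun z => ?_)
    ring_nf
  · exact Filter.Eventually.of_forall fun z => by positivity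

lemma key_single_integral' :
    ∫ z, Real.exp ((3/4) * (‖z‖) ^ 2) ∂stdComplexGaussian = 4 := by
  rw [integral_std']
  have : (fun z : ℂ => Real.exp (-(‖z‖) ^ 2) / π * Real.exp ((3/4) * (‖z‖) ^ 2))
      = fun z : ℂ => Real.exp (-(1/4) * ‖z‖^2) / π := by
    funext z
    rw [div_mul_eq_mul_div, ← Real.exp_add]
    ring_nf
  rw [this, integral_div, gauss_int' (by norm_num)]
  field_simp

lemma key_single_integrable' :
    Integrable (fun z => Real.exp ((3/4) * (‖z‖) ^ 2)) stdComplexGaussian := by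
  apply integrable_std'
  have : (fun z : ℂ => Real.exp (-(‖z‖) ^ 2) / π * Real.exp ((3/4) * (‖z‖) ^ 2))
      = fun z : ℂ => Real.exp (-(1/4) * ‖z‖^2) / π := by
    funext z
    rw [div_mul_eq_mul_div, ← Real.exp_add]
    ring_nf
  rw [this]
  exact (gauss_integrable' (by norm_num)).div_const π

lemma pi_integral' (m : ℕ) (f : ℂ → ℝ) :
    ∫ g : Fin m × Fin m → ℂ, ∏ p : Fin m × Fin m, f (g p) ∂gaussianFamily m
      = (∫ z, f z ∂stdComplexGaussian) ^ (m * m) := by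
  letI : MeasureSpace ℂ := ⟨stdComplexGaussian⟩
  haveI : SigmaFinite (volume : Measure ℂ) := by
    change SigmaFinite stdComplexGaussian; infer_instance
  have h := MeasureTheory.integral_fintype_prod_eq_pow (𝕜 := ℝ) (ι := Fin m × Fin m) f (μ := stdComplexGaussian)
  rw [Fintype.card_prod, Fintype.card_fin] at h
  exact h

lemma pi_integrable' (m : ℕ) (f : ℂ → ℝ) (hf : Integrable f stdComplexGaussian) :
    Integrable (fun g : Fin m × Fin m → ℂ => ∏ p : Fin m × Fin m, f (g p))
      (gaussianFamily m) := by
  letI : MeasureSpace ℂ := ⟨stdComplexGaussian⟩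
  haveI : SigmaFinite (volume : Measure ℂ) := by
    change SigmaFinite stdComplexGaussian; infer_instance
  exact MeasureTheory.Integrable.fintype_prod (f := fun _ : Fin m × Fin m => f) (fun _ => hf)

lemma entry_bound' {m : ℕ} (A : Matrix (Fin m) (Fin m) ℂ) {a : ℝ} (ha : 0 ≤ a)
    (h : ∀ i j, ‖A i j‖ ≤ a) :
    ∀ k, 1 ≤ k → ∀ i j, ‖(A ^ k) i j‖ ≤ (m : ℝ) ^ (k - 1) * a ^ k := by
  intro k
  induction k with
  | zero => omega
  | succ n ih =>
    intro _ i j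
    rcases Nat.eq_zero_or_pos n with hn | hn
    · subst hn
      simpa using h i j
    · rw [pow_succ, Matrix.mul_apply]
      calc ‖∑ l, (A ^ n) i l * A l j‖
          ≤ ∑ l, ‖(A ^ n) i l * A l j‖ :=
            norm_sum_le _ _
        _ ≤ ∑ _l : Fin m, ((m : ℝ) ^ (n - 1) * a ^ n) * a := by
            refine Finset.sum_le_sum fun l _ => ?_
            rw [norm_mul]
            exact mul_le_mul (ih hn i l) (h l j) (norm_nonneg _)
              (by positivity)
        _ = (m : ℝ) ^ (n - 1 + 1) * a ^ (n + 1) := by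
            rw [Finset.sum_const, Finset.card_univ, Fintype.card_fin, nsmul_eq_mul,
              pow_succ, pow_succ]
            ring
        _ = (m : ℝ) ^ (n + 1 - 1) * a ^ (n + 1) := by
            have hn' : n - 1 + 1 = n := by omega
            rw [hn', Nat.add_sub_cancel]

lemma trace_bound' {m : ℕ} (A : Matrix (Fin m) (Fin m) ℂ) {a : ℝ} (ha : 0 ≤ a)
    (h : ∀ i j, ‖A i j‖ ≤ a) (k : ℕ) (hk : 1 ≤ k) :
    ‖Matrix.trace (A ^ k)‖ ≤ (m : ℝ) * ((m : ℝ) ^ (k - 1) * a ^ k) := by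
  unfold Matrix.trace
  calc ‖∑ i, (A ^ k).diag i‖ ≤ ∑ i, ‖(A ^ k) i i‖ :=
        norm_sum_le _ _
    _ ≤ ∑ _i : Fin m, (m : ℝ) ^ (k - 1) * a ^ k :=
        Finset.sum_le_sum fun i _ => entry_bound' A ha h k hk i i
    _ = (m : ℝ) * ((m : ℝ) ^ (k - 1) * a ^ k) := by
        rw [Finset.sum_const, Finset.card_univ, Fintype.card_fin, nsmul_eq_mul]

lemma aux1' (k : ℕ) {x T : ℝ} (hx : 0 ≤ x) (h : T < x) :
    (Real.sqrt x) ^ k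
      ≤ k.factorial * Real.exp 1 * Real.exp (-T / 2) * Real.exp (3 / 4 * x) := by
  have hfac : (0:ℝ) < k.factorial := by positivity
  have h1 : (Real.sqrt x) ^ k ≤ k.factorial * Real.exp (Real.sqrt x) := by
    have := Real.pow_div_factorial_le_exp (x := Real.sqrt x) (Real.sqrt_nonneg x) k
    rw [div_le_iff₀ hfac] at this
    linarith [this]
  have h2 : Real.sqrt x ≤ 1 + x / 4 := by
    nlinarith [Real.sq_sqrt hx, Real.sqrt_nonneg x, sq_nonneg (Real.sqrt x - 2)]
  have h3 : Real.exp (Real.sqrt x) ≤ Real.exp 1 * Real.exp (x / 4) := by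
    rw [← Real.exp_add]; exact Real.exp_le_exp.2 h2
  have h4 : (1 : ℝ) ≤ Real.exp ((x - T) / 2) := Real.one_le_exp (by linarith)
  calc (Real.sqrt x) ^ k ≤ k.factorial * Real.exp (Real.sqrt x) := h1
    _ ≤ k.factorial * (Real.exp 1 * Real.exp (x / 4)) := by
        rw [mul_le_mul_iff_right₀ hfac] ; exact h3
    _ ≤ k.factorial * (Real.exp 1 * Real.exp (x / 4)) * Real.exp ((x - T) / 2) :=
        le_mul_of_one_le_right (by positivity) h4
    _ = k.factorial * Real.exp 1 * Real.exp (-T / 2) * Real.exp (3 / 4 * x) := by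
        rw [show (k.factorial : ℝ) * (Real.exp 1 * Real.exp (x / 4)) * Real.exp ((x - T) / 2)
            = k.factorial * Real.exp 1 * (Real.exp (x / 4) * Real.exp ((x - T) / 2)) by ring,
          ← Real.exp_add,
          show (k.factorial : ℝ) * Real.exp 1 * Real.exp (-T / 2) * Real.exp (3 / 4 * x)
            = k.factorial * Real.exp 1 * (Real.exp (-T / 2) * Real.exp (3 / 4 * x)) by ring,
          ← Real.exp_add]
        ring_nf

lemma pointwise_bound' (m k : ℕ) (hm : 1 ≤ m) (hk : 1 ≤ k) (g : Fin m × Fin m → ℂ) :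
    ‖(m : ℂ)⁻¹ * Matrix.trace ((Ghat m g) ^ k)‖
      ≤ ((m : ℝ) ^ (k - 1) / (Real.sqrt m) ^ k)
          * (k.factorial * Real.exp 1 * Real.exp (-((m : ℝ) ^ (2 * m)) / 2))
          * ∏ p : Fin m × Fin m, Real.exp ((3/4) * (‖g p‖) ^ 2) := by
  have hm0 : (0:ℝ) < m := by exact_mod_cast hm
  set S : ℝ := ∑ p : Fin m × Fin m, (‖g p‖) ^ 2 with hS
  set T : ℝ := (m : ℝ) ^ (2 * m) with hT
  have hS0 : 0 ≤ S := Finset.sum_nonneg fun p _ => by positivity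
  have hprod : ∏ p : Fin m × Fin m, Real.exp ((3/4) * (‖g p‖) ^ 2)
      = Real.exp (3/4 * S) := by
    rw [← Real.exp_sum, hS, Finset.mul_sum]
  by_cases hc : T < S
  · -- main case
    set a : ℝ := Real.sqrt S / Real.sqrt m with haa
    have ha : 0 ≤ a := by positivity
    have hentry : ∀ i j, ‖Ghat m g i j‖ ≤ a := by
      intro i j
      have : Ghat m g i j = g (i, j) / (Real.sqrt m : ℂ) := by
        simp only [Ghat, Matrix.of_apply]
        rw [if_pos hc]
      rw [this, norm_div, Complex.norm_real, Real.norm_eq_abs, abs_of_nonneg (Real.sqrt_nonneg _)]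
      have h1 : (‖g (i, j)‖) ^ 2 ≤ S :=
        Finset.single_le_sum (f := fun p : Fin m × Fin m => (‖g p‖) ^ 2)
          (fun p _ => by positivity) (Finset.mem_univ (i, j))
      have h2 : ‖g (i, j)‖ ≤ Real.sqrt S := by
        calc ‖g (i, j)‖ = Real.sqrt ((‖g (i, j)‖) ^ 2) :=
              (Real.sqrt_sq (norm_nonneg _)).symm
          _ ≤ Real.sqrt S := Real.sqrt_le_sqrt h1
      rw [haa]
      gcongr
    have htr := trace_bound' (Ghat m g) ha hentry k hk
    calc ‖(m : ℂ)⁻¹ * Matrix.trace ((Ghat m g) ^ k)‖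
        = (m : ℝ)⁻¹ * ‖Matrix.trace ((Ghat m g) ^ k)‖ := by
          rw [norm_mul, norm_inv, Complex.norm_natCast]
      _ ≤ (m : ℝ)⁻¹ * ((m : ℝ) * ((m : ℝ) ^ (k - 1) * a ^ k)) := by
          gcongr
      _ = ((m : ℝ) ^ (k - 1) / (Real.sqrt m) ^ k) * (Real.sqrt S) ^ k := by
          rw [haa, div_pow]
          field_simp
      _ ≤ ((m : ℝ) ^ (k - 1) / (Real.sqrt m) ^ k)
            * (k.factorial * Real.exp 1 * Real.exp (-T / 2) * Real.exp (3 / 4 * S)) := by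
          apply mul_le_mul_of_nonneg_left (aux1' k hS0 hc) (by positivity)
      _ = ((m : ℝ) ^ (k - 1) / (Real.sqrt m) ^ k)
            * (k.factorial * Real.exp 1 * Real.exp (-T / 2))
            * ∏ p : Fin m × Fin m, Real.exp ((3/4) * (‖g p‖) ^ 2) := by
          rw [hprod]
          ring
  · -- the matrix is zero
    have hzero : Ghat m g = 0 := by
      ext i j
      simp only [Ghat, Matrix.of_apply, Matrix.zero_apply]
      rw [if_neg hc]
    rw [hzero, zero_pow (by omega : k ≠ 0), Matrix.trace_zero, mul_zero, norm_zero]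
    positivity

lemma rpow_eq' (m k : ℕ) (hm : 1 ≤ m) (hk : 1 ≤ k) :
    (m : ℝ) ^ (k - 1) / (Real.sqrt m) ^ k = (m : ℝ) ^ ((k : ℝ) / 2 - 1) := by
  have hm0 : (0:ℝ) < m := by exact_mod_cast hm
  rw [Real.sqrt_eq_rpow, ← Real.rpow_natCast ((m:ℝ) ^ ((1:ℝ)/2)) k, ← Real.rpow_mul hm0.le,
    ← Real.rpow_natCast (m:ℝ) (k-1), ← Real.rpow_sub hm0]
  congr 1
  rw [Nat.cast_sub hk]
  push_cast
  ring

set_option maxHeartbeats 1000000 in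
lemma numeric' (m : ℕ) (hm : 1 ≤ m) :
    Real.exp (-((m:ℝ) ^ (2*m)) / 2) * 4 ^ (m*m)
      ≤ 10 * Real.exp (-(m:ℝ) ^ ((m:ℝ) - 1/2)) := by
  have h1 : Real.exp 1 < 2.7182818286 := Real.exp_one_lt_d9
  have h1' : 2.7182818283 < Real.exp 1 := Real.exp_one_gt_d9
  rcases Nat.lt_or_ge m 2 with hm2 | hm2
  · -- m = 1
    have : m = 1 := by omega
    subst this
    norm_num [Real.one_rpow]
    have hv : Real.exp (1/2) * Real.exp (1/2) = Real.exp 1 := by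
      rw [← Real.exp_add]; norm_num
    have h2 : Real.exp (1/2) ≤ 5/2 := by nlinarith [Real.exp_pos (1/2)]
    have h3 : Real.exp (-(1:ℝ)/2) = Real.exp (1/2) * Real.exp (-1) := by
      rw [← Real.exp_add]; norm_num
    rw [show (-(1/2) : ℝ) = -(1:ℝ)/2 by norm_num, h3]
    nlinarith [Real.exp_pos (-1:ℝ)]
  rcases Nat.lt_or_ge m 3 with hm3 | hm3
  · -- m = 2
    have : m = 2 := by omega
    subst this
    norm_num
    have he4 : Real.exp 4 = (Real.exp 1) ^ 4 := by
      rw [← Real.exp_nat_mul]; norm_num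
    have h54 : (54:ℝ) ≤ Real.exp 4 := by
      have ha : (2.718:ℝ) < Real.exp 1 := by linarith
      have hb : (7.38:ℝ) < Real.exp 1 * Real.exp 1 := by nlinarith
      have hcc : (54:ℝ) < (Real.exp 1 * Real.exp 1) * (Real.exp 1 * Real.exp 1) := by nlinarith
      have hd : Real.exp 1 ^ 4 = (Real.exp 1 * Real.exp 1) * (Real.exp 1 * Real.exp 1) := by ring
      rw [he4, hd]; linarith
    have hneg : Real.exp (-4:ℝ) ≤ 1/54 := by
      rw [Real.exp_neg]
      rw [inv_le_comm₀ (Real.exp_pos 4) (by norm_num)] at *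
      calc (1/54 : ℝ)⁻¹ = 54 := by norm_num
        _ ≤ Real.exp 4 := h54
    have h8 : Real.exp (-8:ℝ) = Real.exp (-4) * Real.exp (-4) := by
      rw [← Real.exp_add]; norm_num
    have hr : (2:ℝ) ^ ((3:ℝ)/2) ≤ 4 := by
      have h24 : (2:ℝ) ^ ((2:ℕ):ℝ) = 4 := by rw [Real.rpow_natCast]; norm_num
      calc (2:ℝ) ^ ((3:ℝ)/2) ≤ (2:ℝ) ^ (((2:ℕ)):ℝ) :=
            Real.rpow_le_rpow_of_exponent_le one_le_two (by push_cast; norm_num)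
        _ = 4 := h24
    have hmono : Real.exp (-(4:ℝ)) ≤ Real.exp (-(2:ℝ) ^ ((3:ℝ)/2)) :=
      Real.exp_le_exp.2 (by linarith)
    nlinarith [Real.exp_pos (-4:ℝ), Real.exp_pos (-(2:ℝ) ^ ((3:ℝ)/2))]
  · -- m ≥ 3
    have hkey : 4*(m*m) + 2*m^m ≤ m^(2*m) := by
      have h1 : m*m ≤ m^m := by
        calc m*m = m^2 := (sq m).symm
          _ ≤ m^m := Nat.pow_le_pow_right (by omega) (by omega)
      have h2 : 27 ≤ m^m := by
        calc 27 = 3^3 := rfl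
          _ ≤ m^3 := Nat.pow_le_pow_left hm3 3
          _ ≤ m^m := Nat.pow_le_pow_right (by omega) hm3
      have h3 : m^(2*m) = m^m * m^m := by rw [two_mul, pow_add]
      nlinarith
    have hkeyR : 4*((m:ℝ)*m) + 2*(m:ℝ)^m ≤ (m:ℝ)^(2*m) := by exact_mod_cast hkey
    have hm1 : (1:ℝ) ≤ m := by exact_mod_cast hm
    have hrm : (m:ℝ) ^ ((m:ℝ) - 1/2) ≤ (m:ℝ) ^ (m:ℕ) := by
      rw [← Real.rpow_natCast (m:ℝ) m]
      exact Real.rpow_le_rpow_of_exponent_le hm1 (by linarith)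
    have h4 : (4:ℝ) ≤ Real.exp 2 := by
      have : Real.exp 1 * Real.exp 1 = Real.exp 2 := by rw [← Real.exp_add]; norm_num
      nlinarith
    have h5 : (4:ℝ)^(m*m) ≤ Real.exp (((m*m : ℕ):ℝ) * 2) := by
      calc (4:ℝ)^(m*m) ≤ (Real.exp 2)^(m*m) := pow_le_pow_left₀ (by norm_num) h4 _
        _ = Real.exp (((m*m : ℕ):ℝ) * 2) := (Real.exp_nat_mul 2 (m*m)).symm
    calc Real.exp (-((m:ℝ) ^ (2*m)) / 2) * 4 ^ (m*m)
        ≤ Real.exp (-((m:ℝ) ^ (2*m)) / 2) * Real.exp (((m*m : ℕ):ℝ) * 2) := by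
          apply mul_le_mul_of_nonneg_left h5 (Real.exp_pos _).le
      _ = Real.exp (-((m:ℝ) ^ (2*m)) / 2 + ((m*m : ℕ):ℝ) * 2) := by rw [← Real.exp_add]
      _ ≤ Real.exp (-(m:ℝ) ^ ((m:ℝ) - 1/2)) := by
          apply Real.exp_le_exp.2
          push_cast
          nlinarith [hrm, hkeyR]
      _ ≤ 10 * Real.exp (-(m:ℝ) ^ ((m:ℝ) - 1/2)) := by
          nlinarith [Real.exp_pos (-(m:ℝ) ^ ((m:ℝ) - 1/2))]

lemma main_bound' (k : ℕ) (hk : 1 ≤ k) (m : ℕ) (hm : 1 ≤ m) :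
    ‖tauHat m k‖
      ≤ (10 * k.factorial * Real.exp 1) * (m : ℝ) ^ ((k : ℝ) / 2 - 1)
          * Real.exp (-(m : ℝ) ^ ((m : ℝ) - 1 / 2)) := by
  set f : ℂ → ℝ := fun z => Real.exp ((3/4) * (‖z‖) ^ 2) with hf
  set c : ℝ := ((m : ℝ) ^ (k - 1) / (Real.sqrt m) ^ k)
      * (k.factorial * Real.exp 1 * Real.exp (-((m : ℝ) ^ (2 * m)) / 2)) with hc
  have hInt : Integrable (fun g : Fin m × Fin m → ℂ => c * ∏ p : Fin m × Fin m, f (g p))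
      (gaussianFamily m) := (pi_integrable' m f key_single_integrable').const_mul c
  have h1 : ‖tauHat m k‖
      ≤ ∫ g, ‖(m : ℂ)⁻¹ * Matrix.trace ((Ghat m g) ^ k)‖ ∂gaussianFamily m := by
    rw [tauHat]
    exact norm_integral_le_integral_norm _
  have h2 : (∫ g, ‖(m : ℂ)⁻¹ * Matrix.trace ((Ghat m g) ^ k)‖ ∂gaussianFamily m)
      ≤ ∫ g, c * ∏ p : Fin m × Fin m, f (g p) ∂gaussianFamily m := by
    refine integral_mono_of_nonneg (Filter.Eventually.of_forall fun g => norm_nonneg _) hInt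
      (Filter.Eventually.of_forall fun g => ?_)
    exact pointwise_bound' m k hm hk g
  have h3 : (∫ g, c * ∏ p : Fin m × Fin m, f (g p) ∂gaussianFamily m)
      = c * 4 ^ (m*m) := by
    rw [integral_const_mul, pi_integral', key_single_integral']
  calc ‖tauHat m k‖ ≤ c * 4 ^ (m*m) := by
        rw [← h3]; exact h1.trans h2
    _ = (m : ℝ) ^ ((k : ℝ) / 2 - 1) * ((k.factorial * Real.exp 1)
          * (Real.exp (-((m : ℝ) ^ (2 * m)) / 2) * 4 ^ (m*m))) := by
        rw [hc, rpow_eq' m k hm hk]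
        ring
    _ ≤ (m : ℝ) ^ ((k : ℝ) / 2 - 1) * ((k.factorial * Real.exp 1)
          * (10 * Real.exp (-(m : ℝ) ^ ((m : ℝ) - 1 / 2)))) := by
        have hnum := numeric' m hm
        have hpos1 : (0:ℝ) ≤ (m : ℝ) ^ ((k : ℝ) / 2 - 1) := by positivity
        have hpos2 : (0:ℝ) ≤ (k.factorial : ℝ) * Real.exp 1 := by positivity
        apply mul_le_mul_of_nonneg_left _ hpos1
        exact mul_le_mul_of_nonneg_left hnum hpos2
    _ = (10 * k.factorial * Real.exp 1) * (m : ℝ) ^ ((k : ℝ) / 2 - 1)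
          * Real.exp (-(m : ℝ) ^ ((m : ℝ) - 1 / 2)) := by ring

/-- For every `k ≥ 1` there is `C > 0` such that for every `m ≥ 1`,
`|τ'_m((Ĝ^m)^k)| ≤ C · m^{k/2 − 1} · e^{-m^{m−1/2}}`; in particular
`τ'_m((Ĝ^m)^k) → 0` as `m → ∞`. -/
theorem tauHat_pow_bound (k : ℕ) (hk : 1 ≤ k) :
    (∃ C : ℝ, 0 < C ∧ ∀ m : ℕ, 1 ≤ m →
        ‖tauHat m k‖
          ≤ C * (m : ℝ) ^ ((k : ℝ) / 2 - 1) * Real.exp (-(m : ℝ) ^ ((m : ℝ) - 1 / 2))) ∧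
      Filter.Tendsto (fun m : ℕ => tauHat m k) Filter.atTop (nhds 0) := by
  constructor
  · exact ⟨10 * k.factorial * Real.exp 1, by positivity, fun m hm => main_bound' k hk m hm⟩
  · set C : ℝ := 10 * k.factorial * Real.exp 1 with hC
    have hC0 : (0:ℝ) < C := by positivity
    have hev : ∀ᶠ m : ℕ in Filter.atTop,
        ‖tauHat m k‖ ≤ C * ((m : ℝ) ^ k * Real.exp (-(m : ℝ))) := by
      filter_upwards [Filter.eventually_ge_atTop 1] with m hm
      have hm1 : (1:ℝ) ≤ m := by exact_mod_cast hm
      have hb := main_bound' k hk m hm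
      have e1 : (m : ℝ) ^ ((k : ℝ) / 2 - 1) ≤ (m : ℝ) ^ k := by
        rw [← Real.rpow_natCast (m:ℝ) k]
        apply Real.rpow_le_rpow_of_exponent_le hm1
        have : (0:ℝ) ≤ (k:ℝ) := Nat.cast_nonneg k
        linarith
      have e2 : Real.exp (-(m : ℝ) ^ ((m : ℝ) - 1/2)) ≤ Real.exp (-(m : ℝ)) := by
        apply Real.exp_le_exp.2
        apply neg_le_neg
        rcases Nat.lt_or_ge m 2 with h | h
        · have hme : m = 1 := by omega
          subst hme
          norm_num [Real.one_rpow]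
        · have hm2 : (2:ℝ) ≤ (m:ℝ) := by exact_mod_cast h
          calc (m:ℝ) = (m:ℝ) ^ (1:ℝ) := (Real.rpow_one _).symm
            _ ≤ (m:ℝ) ^ ((m:ℝ) - 1/2) :=
              Real.rpow_le_rpow_of_exponent_le hm1 (by linarith)
      calc ‖tauHat m k‖ = ‖tauHat m k‖ := rfl
        _ ≤ C * (m : ℝ) ^ ((k : ℝ) / 2 - 1) * Real.exp (-(m : ℝ) ^ ((m : ℝ) - 1/2)) := hb
        _ ≤ C * ((m : ℝ) ^ k * Real.exp (-(m : ℝ))) := by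
            rw [mul_assoc]
            apply mul_le_mul_of_nonneg_left _ hC0.le
            exact mul_le_mul e1 e2 (Real.exp_pos _).le (by positivity)
    have htend : Filter.Tendsto (fun m : ℕ => C * ((m : ℝ) ^ k * Real.exp (-(m : ℝ))))
        Filter.atTop (nhds 0) := by
      have h := (Real.tendsto_pow_mul_exp_neg_atTop_nhds_zero k).comp
        tendsto_natCast_atTop_atTop
      simpa using h.const_mul C
    exact squeeze_zero_norm' hev htend
end

section
/- For every integer k ≥ 1 and every choice of exponents ε₁, …, ε_k ∈ {1, *}, the mixed moments of the truncated-away part of the Gaussian random matrix vanish asymptotically: τ'_m( (Ĝ^m)^{ε₁} (Ĝ^m)^{ε₂} ⋯ (Ĝ^m)^{ε_k} ) → 0 as m → ∞, where X^1 = X and X^* is the conjugate transpose of X. In other words, Ĝ^m converges to 0 in *-distribution. -/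
open MeasureTheory Matrix

/-- The word `X^{ε₁} X^{ε₂} ⋯ X^{ε_k}` in a matrix `X` and its conjugate transpose,
where an exponent `ε j = true` stands for `X^1 = X` and `ε j = false` for `X^* = Xᴴ`. -/
noncomputable def starWord {m k : ℕ} (ε : Fin k → Bool) (X : Matrix (Fin m) (Fin m) ℂ) :
    Matrix (Fin m) (Fin m) ℂ :=
  (List.ofFn fun j : Fin k => if ε j then X else Xᴴ).prod

/-! ### Auxiliary lemmas -/

namespace GhatAux

open Real Filter

/-- The planar Gaussian integral `∫_ℂ e^{-b|z|²} = π/b`. -/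
lemma gaussian_plane (b : ℝ) (hb : 0 < b) :
    ∫⁻ z : ℂ, ENNReal.ofReal (Real.exp (-b * ‖z‖ ^ 2)) = ENNReal.ofReal (π / b) := by
  have h1 : (fun z : ℂ => ENNReal.ofReal (Real.exp (-b * ‖z‖ ^ 2)))
      = fun z : ℂ => (fun p : ℝ × ℝ =>
          ENNReal.ofReal (Real.exp (-b * p.1 ^ 2) * Real.exp (-b * p.2 ^ 2)))
        (Complex.measurableEquivRealProd z) := by
    funext z
    simp only [Complex.measurableEquivRealProd_apply]
    rw [← Real.exp_add]
    congr 1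
    rw [Complex.sq_norm, Complex.normSq_apply]
    ring
  have hmeas : Measurable fun p : ℝ × ℝ =>
      ENNReal.ofReal (Real.exp (-b * p.1 ^ 2) * Real.exp (-b * p.2 ^ 2)) := by
    fun_prop
  rw [h1, Complex.volume_preserving_equiv_real_prod.lintegral_comp hmeas]
  have hint : Integrable (fun x : ℝ => Real.exp (-b * x ^ 2)) := integrable_exp_neg_mul_sq hb
  have hnn : ∀ᵐ x : ℝ ∂volume, 0 ≤ Real.exp (-b * x ^ 2) :=
    Filter.Eventually.of_forall fun x => (Real.exp_pos _).le
  have h1d : ∫⁻ x : ℝ, ENNReal.ofReal (Real.exp (-b * x ^ 2))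
      = ENNReal.ofReal (Real.sqrt (π / b)) := by
    rw [← ofReal_integral_eq_lintegral_ofReal hint hnn, integral_gaussian]
  have : ∀ p : ℝ × ℝ, ENNReal.ofReal (Real.exp (-b * p.1 ^ 2) * Real.exp (-b * p.2 ^ 2))
      = ENNReal.ofReal (Real.exp (-b * p.1 ^ 2)) * ENNReal.ofReal (Real.exp (-b * p.2 ^ 2)) := by
    intro p; rw [ENNReal.ofReal_mul (Real.exp_pos _).le]
  simp_rw [this]
  rw [MeasureTheory.Measure.volume_eq_prod,
    lintegral_prod_mul (f := fun x : ℝ => ENNReal.ofReal (Real.exp (-b * x ^ 2)))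
      (g := fun x : ℝ => ENNReal.ofReal (Real.exp (-b * x ^ 2))) (by fun_prop) (by fun_prop), h1d,
    ← ENNReal.ofReal_mul (Real.sqrt_nonneg _), Real.mul_self_sqrt (by positivity)]

lemma measurable_absC : Measurable fun z : ℂ => ‖z‖ :=
  continuous_norm.measurable

lemma stdGaussian_lintegral {f : ℂ → ENNReal} (hf : Measurable f) :
    ∫⁻ z, f z ∂stdComplexGaussian
      = ∫⁻ z, ENNReal.ofReal (Real.exp (-(‖z‖) ^ 2) / Real.pi) * f z ∂volume := by
  rw [stdComplexGaussian, lintegral_withDensity_eq_lintegral_mul _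
    (Measurable.ennreal_ofReal (by fun_prop)) hf]
  rfl

/-- The exponential moment `∫ e^{(3/4)|z|²} dγ(z) = 4`. -/
lemma moment34 : ∫⁻ z, ENNReal.ofReal (Real.exp ((3/4) * ‖z‖ ^ 2)) ∂stdComplexGaussian
    = ENNReal.ofReal 4 := by
  rw [stdGaussian_lintegral (Measurable.ennreal_ofReal
    (((measurable_absC.pow_const 2).const_mul _).exp))]
  have h : ∀ z : ℂ, ENNReal.ofReal (Real.exp (-(‖z‖) ^ 2) / Real.pi)
        * ENNReal.ofReal (Real.exp ((3/4) * ‖z‖ ^ 2))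
      = ENNReal.ofReal (1 / Real.pi)
        * ENNReal.ofReal (Real.exp (-(1/4 : ℝ) * ‖z‖ ^ 2)) := by
    intro z
    rw [← ENNReal.ofReal_mul (by positivity), ← ENNReal.ofReal_mul (by positivity)]
    congr 1
    rw [show -(1/4:ℝ) * ‖z‖ ^ 2 = -(‖z‖)^2 + 3/4 * ‖z‖ ^ 2 by ring,
      Real.exp_add]
    ring
  simp_rw [h]
  rw [lintegral_const_mul' _ _ ENNReal.ofReal_ne_top, gaussian_plane (1/4) (by norm_num),
    ← ENNReal.ofReal_mul (by positivity)]
  rw [show (1 / Real.pi) * (π / (1/4)) = 4 by field_simp]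

instance : IsProbabilityMeasure stdComplexGaussian := by
  constructor
  rw [← lintegral_one, stdGaussian_lintegral measurable_const]
  simp only [mul_one]
  have h : ∀ z : ℂ, ENNReal.ofReal (Real.exp (-(‖z‖) ^ 2) / Real.pi)
      = ENNReal.ofReal (1 / Real.pi)
        * ENNReal.ofReal (Real.exp (-(1:ℝ) * ‖z‖ ^ 2)) := by
    intro z
    rw [← ENNReal.ofReal_mul (by positivity)]
    congr 1
    rw [neg_one_mul]
    field_simp
  simp_rw [h]
  rw [lintegral_const_mul' _ _ ENNReal.ofReal_ne_top, gaussian_plane 1 (by norm_num),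
    ← ENNReal.ofReal_mul (by positivity)]
  have hpi := Real.pi_pos
  rw [show (1 / Real.pi) * (π / 1) = 1 by field_simp]
  exact ENNReal.ofReal_one

/-- Entrywise bound on products of matrices with uniformly bounded entries. -/
lemma list_prod_entry_bound {m : ℕ} (c : ℝ) (hc : 0 ≤ c) :
    ∀ (L : List (Matrix (Fin m) (Fin m) ℂ)),
      (∀ A ∈ L, ∀ i j, ‖A i j‖ ≤ c) →
      ∀ i j, ‖L.prod i j‖ ≤ ((m : ℝ) * c) ^ L.length := by
  intro L
  induction L with
  | nil =>
    intro _ i j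
    simp only [List.prod_nil, List.length_nil, pow_zero]
    by_cases h : i = j
    · simp [Matrix.one_apply, h]
    · simp [Matrix.one_apply, h]
  | cons A L ih =>
    intro hL i j
    have hA : ∀ i j, ‖A i j‖ ≤ c := hL A (List.mem_cons_self)
    have hP : ∀ i j, ‖L.prod i j‖ ≤ ((m : ℝ) * c) ^ L.length :=
      ih (fun B hB => hL B (List.mem_cons_of_mem A hB))
    rw [List.prod_cons, List.length_cons]
    calc ‖(A * L.prod) i j‖
        = ‖∑ l, A i l * L.prod l j‖ := by rw [Matrix.mul_apply]
      _ ≤ ∑ l, ‖A i l * L.prod l j‖ := norm_sum_le _ _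
      _ ≤ ∑ _l : Fin m, c * ((m : ℝ) * c) ^ L.length := by
          refine Finset.sum_le_sum fun l _ => ?_
          rw [norm_mul]
          exact mul_le_mul (hA i l) (hP l j) (norm_nonneg _) hc
      _ = (m : ℝ) * (c * ((m : ℝ) * c) ^ L.length) := by
          rw [Finset.sum_const, Finset.card_univ, Fintype.card_fin, nsmul_eq_mul]
      _ = ((m : ℝ) * c) ^ (L.length + 1) := by ring

lemma trace_word_bound {m : ℕ} (c : ℝ) (hc : 0 ≤ c)
    (L : List (Matrix (Fin m) (Fin m) ℂ))
    (hL : ∀ A ∈ L, ∀ i j, ‖A i j‖ ≤ c) :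
    ‖Matrix.trace L.prod‖ ≤ (m : ℝ) * ((m : ℝ) * c) ^ L.length := by
  calc ‖Matrix.trace L.prod‖
      ≤ ∑ i, ‖L.prod i i‖ := norm_sum_le _ _
    _ ≤ ∑ _i : Fin m, ((m : ℝ) * c) ^ L.length :=
        Finset.sum_le_sum fun i _ => list_prod_entry_bound c hc L hL i i
    _ = (m : ℝ) * ((m : ℝ) * c) ^ L.length := by
        rw [Finset.sum_const, Finset.card_univ, Fintype.card_fin, nsmul_eq_mul]

lemma lintegral_pi_prod_fin {X : Type*} [MeasurableSpace X] (μ : Measure X) [SigmaFinite μ]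
    {f : X → ENNReal} (hf : Measurable f) :
    ∀ n : ℕ, ∫⁻ x : Fin n → X, ∏ i, f (x i) ∂(Measure.pi fun _ => μ)
      = (∫⁻ x, f x ∂μ) ^ n := by
  intro n
  induction n with
  | zero => simp [Measure.pi_empty_univ]
  | succ n ih =>
    have hmp := (measurePreserving_piFinSuccAbove (fun _ : Fin (n + 1) => μ) 0).symm
    have hF : Measurable fun x : Fin (n + 1) → X => ∏ i, f (x i) :=
      Finset.measurable_prod _ fun i _ => hf.comp (measurable_pi_apply i)
    rw [← hmp.lintegral_comp hF]
    have key : ∀ p : X × (Fin n → X),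
        (∏ i, f (((MeasurableEquiv.piFinSuccAbove (fun _ : Fin (n+1) => X) 0).symm p) i))
          = f p.1 * ∏ i : Fin n, f (p.2 i) := by
      intro p
      simp only [MeasurableEquiv.piFinSuccAbove_symm_apply, Fin.insertNth_zero]
      rw [Fin.prod_univ_succ]
      simp [Fin.cons_zero, Fin.cons_succ]
    simp_rw [key]
    rw [lintegral_prod_mul (f := f) (g := fun x : Fin n → X => ∏ i, f (x i)) hf.aemeasurable
      (Finset.measurable_prod _ fun i _ => hf.comp (measurable_pi_apply i)).aemeasurable, ih,
      pow_succ]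
    ring

/-- Lebesgue integral of a product of identical single-coordinate functions over a
finite product of copies of a measure. -/
lemma lintegral_pi_prod {ι : Type*} [Fintype ι] {X : Type*} [MeasurableSpace X] (μ : Measure X)
    [SigmaFinite μ] {f : X → ENNReal} (hf : Measurable f) :
    ∫⁻ x : ι → X, ∏ i, f (x i) ∂(Measure.pi fun _ => μ)
      = (∫⁻ x, f x ∂μ) ^ (Fintype.card ι) := by
  let e := (Fintype.equivFin ι).symm
  have hmp := measurePreserving_piCongrLeft (fun _ : ι => μ) e
  have hF : Measurable fun x : ι → X => ∏ i, f (x i) :=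
    Finset.measurable_prod _ fun i _ => hf.comp (measurable_pi_apply i)
  rw [← hmp.lintegral_comp hF]
  have key : ∀ x : Fin (Fintype.card ι) → X,
      (∏ i, f ((MeasurableEquiv.piCongrLeft (fun _ : ι => X) e) x i))
        = ∏ i' : Fin (Fintype.card ι), f (x i') := by
    intro x
    rw [← e.prod_comp]
    refine Finset.prod_congr rfl fun i' _ => ?_
    rw [MeasurableEquiv.coe_piCongrLeft, Equiv.piCongrLeft_apply_apply]
  simp_rw [key]
  exact lintegral_pi_prod_fin μ hf _

/-- The pointwise bound on the normalized trace of a word in `Ĝ^m`. -/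
lemma pointwise_bound (k m : ℕ) (hk : 1 ≤ k) (hm : 1 ≤ m) (ε : Fin k → Bool)
    (g : Fin m × Fin m → ℂ) :
    ‖(m : ℂ)⁻¹ * Matrix.trace (starWord ε (Ghat m g))‖ ≤
      ((k.factorial : ℝ) * 4 ^ k) * (m : ℝ) ^ k * Real.exp (-((m : ℝ) ^ (2 * m)) / 2)
        * Real.exp ((3/4) * ∑ p : Fin m × Fin m, ‖g p‖ ^ 2) := by
  set S : ℝ := ∑ p : Fin m × Fin m, ‖g p‖ ^ 2 with hSdef
  set T : ℝ := (m : ℝ) ^ (2 * m) with hTdef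
  have hm1 : (1 : ℝ) ≤ (m : ℝ) := by exact_mod_cast hm
  have hS0 : 0 ≤ S := Finset.sum_nonneg fun p _ => by positivity
  have hT1 : (1 : ℝ) ≤ T := one_le_pow₀ hm1
  have hRHSpos : 0 ≤ ((k.factorial : ℝ) * 4 ^ k) * (m : ℝ) ^ k * Real.exp (-T / 2)
      * Real.exp ((3/4) * S) := by positivity
  by_cases hE : T < S
  · -- the untruncated regime
    set c : ℝ := Real.sqrt S / Real.sqrt m with hcdef
    have hc : 0 ≤ c := by positivity
    have hX : ∀ i j, ‖Ghat m g i j‖ ≤ c := by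
      intro i j
      show ‖if T < S then g (i, j) / (Real.sqrt m : ℂ) else 0‖ ≤ c
      rw [if_pos hE, norm_div, Complex.norm_real, Real.norm_eq_abs, abs_of_nonneg (Real.sqrt_nonneg _), hcdef]
      have h1 : ‖g (i, j)‖ ^ 2 ≤ S :=
        Finset.single_le_sum (f := fun p => ‖g p‖ ^ 2)
          (fun p _ => by positivity) (Finset.mem_univ (i, j))
      have h2 : ‖g (i, j)‖ ≤ Real.sqrt S := by
        calc ‖g (i, j)‖ = Real.sqrt (‖g (i, j)‖ ^ 2) := by
              rw [Real.sqrt_sq (norm_nonneg _)]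
          _ ≤ Real.sqrt S := Real.sqrt_le_sqrt h1
      gcongr
    have hentries : ∀ A ∈ (List.ofFn fun j : Fin k => if ε j then Ghat m g else (Ghat m g)ᴴ),
        ∀ i j, ‖A i j‖ ≤ c := by
      intro A hA i j
      rcases List.mem_ofFn.mp hA with ⟨t, ht⟩
      subst ht
      by_cases hε : ε t
      · simpa [hε] using hX i j
      · simp only [hε, if_false, Matrix.conjTranspose_apply]
        calc ‖star (Ghat m g j i)‖ = ‖Ghat m g j i‖ := by
              rw [Complex.star_def, Complex.norm_conj]
          _ ≤ c := hX j i
    have htr := trace_word_bound c hc _ hentries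
    rw [List.length_ofFn] at htr
    have hnorm : ‖(m : ℂ)⁻¹ * Matrix.trace (starWord ε (Ghat m g))‖
        ≤ ((m : ℝ) * c) ^ k := by
      rw [norm_mul, norm_inv, Complex.norm_natCast]
      have hmne : (m : ℝ) ≠ 0 := by positivity
      calc (m : ℝ)⁻¹ * ‖Matrix.trace (starWord ε (Ghat m g))‖
          ≤ (m : ℝ)⁻¹ * ((m : ℝ) * ((m : ℝ) * c) ^ k) := by
            refine mul_le_mul_of_nonneg_left ?_ (by positivity)
            exact htr
        _ = ((m : ℝ) * c) ^ k := by field_simp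
    refine hnorm.trans ?_
    -- now bound `((m : ℝ) * c) ^ k`
    have hS1 : (1 : ℝ) ≤ S := le_trans hT1 hE.le
    have hc_le : (m : ℝ) * c ≤ (m : ℝ) * S := by
      refine mul_le_mul_of_nonneg_left ?_ (by positivity)
      calc c ≤ Real.sqrt S := by
            rw [hcdef]
            exact div_le_self (Real.sqrt_nonneg _) (Real.one_le_sqrt.mpr hm1)
        _ ≤ S := (Real.sqrt_le_left hS0).mpr (by nlinarith)
    have hSk : S ^ k ≤ (k.factorial : ℝ) * 4 ^ k * Real.exp (S / 4) := by
      have h := Real.pow_div_factorial_le_exp (x := S / 4) (by positivity) k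
      have hfac : (0 : ℝ) < (k.factorial : ℝ) := by positivity
      rw [div_le_iff₀ hfac] at h
      calc S ^ k = 4 ^ k * (S / 4) ^ k := by
            rw [div_pow]; field_simp
        _ ≤ 4 ^ k * (Real.exp (S / 4) * (k.factorial : ℝ)) :=
            mul_le_mul_of_nonneg_left h (by positivity)
        _ = (k.factorial : ℝ) * 4 ^ k * Real.exp (S / 4) := by ring
    have hexp : Real.exp (S / 4) ≤ Real.exp (-T / 2) * Real.exp ((3/4) * S) := by
      rw [← Real.exp_add]
      exact Real.exp_le_exp.mpr (by linarith)
    calc ((m : ℝ) * c) ^ k ≤ ((m : ℝ) * S) ^ k := pow_le_pow_left₀ (by positivity) hc_le k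
      _ = (m : ℝ) ^ k * S ^ k := mul_pow _ _ _
      _ ≤ (m : ℝ) ^ k * ((k.factorial : ℝ) * 4 ^ k * Real.exp (S / 4)) :=
          mul_le_mul_of_nonneg_left hSk (by positivity)
      _ ≤ (m : ℝ) ^ k * ((k.factorial : ℝ) * 4 ^ k
            * (Real.exp (-T / 2) * Real.exp ((3/4) * S))) := by
          refine mul_le_mul_of_nonneg_left ?_ (by positivity)
          exact mul_le_mul_of_nonneg_left hexp (by positivity)
      _ = ((k.factorial : ℝ) * 4 ^ k) * (m : ℝ) ^ k * Real.exp (-T / 2)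
            * Real.exp ((3/4) * S) := by ring
  · -- the truncated regime: `Ĝ^m = 0`
    have hX0 : Ghat m g = 0 := by
      ext i j
      show (if T < S then g (i, j) / (Real.sqrt m : ℂ) else 0) = 0
      rw [if_neg hE]
    obtain ⟨k', rfl⟩ : ∃ k', k = k' + 1 := ⟨k - 1, (Nat.succ_pred_eq_of_pos hk).symm⟩
    have hW : starWord ε (Ghat m g) = 0 := by
      rw [starWord, hX0, List.ofFn_succ, List.prod_cons]
      have : (if ε 0 then (0 : Matrix (Fin m) (Fin m) ℂ) else (0 : Matrix (Fin m) (Fin m) ℂ)ᴴ)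
          = 0 := by
        by_cases h : ε 0 <;> simp [h]
      rw [this, Matrix.zero_mul]
    rw [hW]
    simpa using hRHSpos

end GhatAux

/-- All mixed `*`-moments of `Ĝ^m` vanish as `m → ∞`:
`τ'_m((Ĝ^m)^{ε₁} ⋯ (Ĝ^m)^{ε_k}) → 0`, i.e. `Ĝ^m` converges to `0` in `*`-distribution. -/
theorem Ghat_tendsto_zero_in_star_distribution (k : ℕ) (hk : 1 ≤ k) (ε : Fin k → Bool) :
    Filter.Tendsto
      (fun m : ℕ =>
        ∫ g : Fin m × Fin m → ℂ,
          ((m : ℂ)⁻¹ * Matrix.trace (starWord ε (Ghat m g))) ∂gaussianFamily m)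
      Filter.atTop (nhds 0) := by
  classical
  open GhatAux in
  rw [tendsto_zero_iff_norm_tendsto_zero]
  set Cst : ℝ := (k.factorial : ℝ) * 4 ^ k with hCst
  have hCst0 : 0 < Cst := by positivity
  refine squeeze_zero' (g := fun m : ℕ => Cst * ((m : ℝ) ^ k * Real.exp (-(m : ℝ))))
    (Filter.Eventually.of_forall fun m => norm_nonneg _) ?_ ?_
  · -- the eventual bound
    filter_upwards [Filter.eventually_ge_atTop 3] with m hm3
    have hm1 : 1 ≤ m := le_trans (by norm_num) hm3
    have hm1' : (1 : ℝ) ≤ (m : ℝ) := by exact_mod_cast hm1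
    set T : ℝ := (m : ℝ) ^ (2 * m) with hTdef
    -- Step 1: pass to the Lebesgue integral
    have h1 : ‖∫ g : Fin m × Fin m → ℂ,
          ((m : ℂ)⁻¹ * Matrix.trace (starWord ε (Ghat m g))) ∂gaussianFamily m‖
        ≤ (∫⁻ g : Fin m × Fin m → ℂ, ENNReal.ofReal
            ‖(m : ℂ)⁻¹ * Matrix.trace (starWord ε (Ghat m g))‖ ∂gaussianFamily m).toReal :=
      norm_integral_le_lintegral_norm _
    -- Step 2: bound the Lebesgue integral pointwise
    have h2 : (∫⁻ g : Fin m × Fin m → ℂ, ENNReal.ofReal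
          ‖(m : ℂ)⁻¹ * Matrix.trace (starWord ε (Ghat m g))‖ ∂gaussianFamily m)
        ≤ ENNReal.ofReal (Cst * (m : ℝ) ^ k * Real.exp (-T / 2))
            * ∫⁻ g : Fin m × Fin m → ℂ, ENNReal.ofReal
              (Real.exp ((3/4) * ∑ p : Fin m × Fin m, ‖g p‖ ^ 2))
              ∂gaussianFamily m := by
      rw [← lintegral_const_mul' _ _ ENNReal.ofReal_ne_top]
      refine lintegral_mono fun g => ?_
      rw [← ENNReal.ofReal_mul (by positivity)]
      exact ENNReal.ofReal_le_ofReal (pointwise_bound k m hk hm1 ε g)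
    -- Step 3: compute the exponential moment
    have h3 : (∫⁻ g : Fin m × Fin m → ℂ, ENNReal.ofReal
          (Real.exp ((3/4) * ∑ p : Fin m × Fin m, ‖g p‖ ^ 2)) ∂gaussianFamily m)
        = ENNReal.ofReal 4 ^ (m * m) := by
      have hfac : ∀ g : Fin m × Fin m → ℂ,
          ENNReal.ofReal (Real.exp ((3/4) * ∑ p : Fin m × Fin m, ‖g p‖ ^ 2))
            = ∏ p : Fin m × Fin m, ENNReal.ofReal (Real.exp ((3/4) * ‖g p‖ ^ 2)) := by
        intro g
        rw [Finset.mul_sum, Real.exp_sum]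
        exact ENNReal.ofReal_prod_of_nonneg fun p _ => (Real.exp_pos _).le
      simp_rw [hfac]
      rw [gaussianFamily, lintegral_pi_prod stdComplexGaussian
        (Measurable.ennreal_ofReal (((measurable_absC.pow_const 2).const_mul _).exp)),
        moment34, Fintype.card_prod, Fintype.card_fin]
    -- put the three steps together
    have h4 : ‖∫ g : Fin m × Fin m → ℂ,
          ((m : ℂ)⁻¹ * Matrix.trace (starWord ε (Ghat m g))) ∂gaussianFamily m‖
        ≤ Cst * (m : ℝ) ^ k * Real.exp (-T / 2) * 4 ^ (m * m) := by
      refine h1.trans ?_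
      have hfin : ENNReal.ofReal (Cst * (m : ℝ) ^ k * Real.exp (-T / 2))
          * ENNReal.ofReal 4 ^ (m * m) ≠ ⊤ :=
        ENNReal.mul_ne_top ENNReal.ofReal_ne_top (ENNReal.pow_ne_top ENNReal.ofReal_ne_top)
      have := ENNReal.toReal_mono hfin (le_trans h2 (le_of_eq (by rw [h3])))
      refine this.trans (le_of_eq ?_)
      rw [ENNReal.toReal_mul, ENNReal.toReal_pow, ENNReal.toReal_ofReal (by positivity),
        ENNReal.toReal_ofReal (by norm_num)]
    refine h4.trans ?_
    -- Step 4: the elementary estimate `e^{-T/2} · 4^{m²} ≤ e^{-m}` for `m ≥ 3`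
    have hkey : Real.exp (-T / 2) * 4 ^ (m * m) ≤ Real.exp (-(m : ℝ)) := by
      have h4e : (4 : ℝ) ^ (m * m) = Real.exp ((m * m : ℕ) * Real.log 4) := by
        rw [Real.exp_nat_mul, Real.exp_log (by norm_num)]
      rw [h4e, ← Real.exp_add, Real.exp_le_exp]
      have hlog : Real.log 4 ≤ 3 := by
        have := Real.log_le_sub_one_of_pos (show (0:ℝ) < 4 by norm_num)
        linarith
      have hm3' : (3 : ℝ) ≤ (m : ℝ) := by exact_mod_cast hm3
      have hT6 : (m : ℝ) ^ 6 ≤ T := by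
        rw [hTdef]
        exact pow_le_pow_right₀ (by linarith) (by omega)
      have h81 : (81 : ℝ) ≤ (m : ℝ) ^ 4 := by
        have := pow_le_pow_left₀ (show (0:ℝ) ≤ 3 by norm_num) hm3' 4
        norm_num at this
        linarith
      have h6 : (m : ℝ) ^ 2 * 81 ≤ (m : ℝ) ^ 6 := by nlinarith
      have hcast : ((m * m : ℕ) : ℝ) = (m : ℝ) ^ 2 := by push_cast; ring
      rw [hcast]
      nlinarith [Real.log_nonneg (show (1:ℝ) ≤ 4 by norm_num)]
    calc Cst * (m : ℝ) ^ k * Real.exp (-T / 2) * 4 ^ (m * m)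
        = Cst * (m : ℝ) ^ k * (Real.exp (-T / 2) * 4 ^ (m * m)) := by ring
      _ ≤ Cst * (m : ℝ) ^ k * Real.exp (-(m : ℝ)) := by
          refine mul_le_mul_of_nonneg_left hkey (by positivity)
      _ = Cst * ((m : ℝ) ^ k * Real.exp (-(m : ℝ))) := by ring
  · -- the bound tends to `0`
    have h := (Real.tendsto_pow_mul_exp_neg_atTop_nhds_zero k).comp tendsto_natCast_atTop_atTop
    have h2 := h.const_mul Cst
    simpa [Function.comp] using h2
end
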